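/- arXiv:2309.14532 — 2 statements merged into one kernel-verified Lean document; each statement's English description precedes it below -/
import Mathlib

section
/- Let λ₁, λ₂ be Borel measures on a topological space X and μ an s-finite Borel measure on a topological space Y, where X and Y are second countable (so X × Y is second countable) and their σ-algebras contain the open sets. If λ₁ and λ₂ vanish on the same open subsets of X (i.e. for every open U ⊆ X, λ₁(U) = 0 if and only if λ₂(U) = 0), then the product measures λ₁ × μ and λ₂ × μ vanish on the same open subsets of X × Y: for every open W ⊆ X × Y, (λ₁ × μ)(W) = 0 if and only if (λ₂ × μ)(W) = 0. -/
open MeasureTheory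

theorem aux_prod_vanish {X Y : Type*}
    [TopologicalSpace X] [MeasurableSpace X] [OpensMeasurableSpace X]
    [SecondCountableTopology X]
    [TopologicalSpace Y] [MeasurableSpace Y] [OpensMeasurableSpace Y]
    [SecondCountableTopology Y]
    (lam₁ lam₂ : Measure X) (μ : Measure Y) [SFinite μ]
    (h : ∀ U : Set X, IsOpen U → lam₁ U = 0 → lam₂ U = 0)
    (W : Set (X × Y)) (hW : IsOpen W) (h0 : (lam₁.prod μ) W = 0) :
    (lam₂.prod μ) W = 0 := by
  obtain ⟨BX, hBXc, -, hBX⟩ := TopologicalSpace.exists_countable_basis X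
  obtain ⟨BY, hBYc, -, hBY⟩ := TopologicalSpace.exists_countable_basis Y
  have hB := hBX.prod hBY
  obtain ⟨S, hSsub, hSeq⟩ := hB.open_eq_sUnion hW
  have hSc : S.Countable := ((hBXc.image2 hBYc _).mono hSsub)
  rw [hSeq] at h0 ⊢
  rw [Set.sUnion_eq_biUnion] at h0 ⊢
  rw [measure_biUnion_null_iff hSc] at h0 ⊢
  intro s hs
  obtain ⟨u, hu, v, hv, rfl⟩ := hSsub hs
  have h1 := h0 _ hs
  simp only [] at h1 ⊢
  rw [Measure.prod_prod] at h1 ⊢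
  rcases mul_eq_zero.1 h1 with h2 | h2
  · rw [h u (hBX.isOpen hu) h2, zero_mul]
  · rw [h2, mul_zero]

theorem prod_vanish_same_open {X Y : Type*}
    [TopologicalSpace X] [MeasurableSpace X] [OpensMeasurableSpace X]
    [SecondCountableTopology X]
    [TopologicalSpace Y] [MeasurableSpace Y] [OpensMeasurableSpace Y]
    [SecondCountableTopology Y]
    (lam₁ lam₂ : Measure X) (μ : Measure Y) [SFinite μ]
    (h : ∀ U : Set X, IsOpen U → (lam₁ U = 0 ↔ lam₂ U = 0)) :
    ∀ W : Set (X × Y), IsOpen W → ((lam₁.prod μ) W = 0 ↔ (lam₂.prod μ) W = 0) := by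
  intro W hW
  constructor
  · exact aux_prod_vanish lam₁ lam₂ μ (fun U hU => (h U hU).mp) W hW
  · exact aux_prod_vanish lam₂ lam₁ μ (fun U hU => (h U hU).mpr) W hW
end

section
/- Let k and t be natural numbers with k even, k ≥ 2, t odd, t ≥ 3, and set p = (t+1)/2, q = (4k+t+1)/2, r = (7k+t−1)/2, p' = (k+t+1)/2, q' = (2k+t+1)/2, r' = (8k+t−1)/2 (all exact integer divisions). Let F be the free group on two generators x and y, and for natural numbers p, q, r let w(p,q,r) = y·x·y^p·x⁻¹·y^q·x⁻¹·y^r ∈ F. Then w(p,q,r) ≠ w(p',q',r') in F, yet for every group G, every g ∈ G, all integers n, m, and the group homomorphism f : F → G determined by f(x) = g^n and f(y) = g^m, one has f(w(p,q,r)) = f(w(p',q',r')). -/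
/-- Lamplighter-like group: lamps `ℤ → ℤ` plus a position `ℤ`. -/
def Lamp : Type := (ℤ → ℤ) × ℤ

instance : Mul Lamp := ⟨fun a b => (fun i => a.1 i + b.1 (i - a.2), a.2 + b.2)⟩
instance : One Lamp := ⟨((fun _ => 0), 0)⟩
instance : Inv Lamp := ⟨fun a => (fun i => -a.1 (i + a.2), -a.2)⟩

lemma Lamp.mul_def (a b : Lamp) : a * b = (fun i => a.1 i + b.1 (i - a.2), a.2 + b.2) := rfl
lemma Lamp.one_def : (1 : Lamp) = ((fun _ => 0), 0) := rfl
lemma Lamp.inv_def (a : Lamp) : a⁻¹ = (fun i => -a.1 (i + a.2), -a.2) := rfl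
lemma Lamp.mul_fst (a b : Lamp) (i : ℤ) : (a * b).1 i = a.1 i + b.1 (i - a.2) := rfl
lemma Lamp.mul_snd (a b : Lamp) : (a * b).2 = a.2 + b.2 := rfl
lemma Lamp.inv_fst (a : Lamp) (i : ℤ) : (a⁻¹).1 i = -a.1 (i + a.2) := rfl
lemma Lamp.inv_snd (a : Lamp) : (a⁻¹).2 = -a.2 := rfl
lemma Lamp.one_fst (i : ℤ) : (1 : Lamp).1 i = 0 := rfl
lemma Lamp.one_snd : (1 : Lamp).2 = 0 := rfl

instance : Group Lamp where
  mul_assoc a b c := by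
    refine Prod.ext ?_ ?_
    · funext i; simp [Lamp.mul_fst, Lamp.mul_snd, show i - a.2 - b.2 = i - (a.2 + b.2) from by ring, add_assoc]
    · simp [Lamp.mul_snd, add_assoc]
  one_mul a := Prod.ext (funext fun i => by simp [Lamp.mul_fst, Lamp.one_fst, Lamp.one_snd]) (by simp [Lamp.mul_snd, Lamp.one_snd])
  mul_one a := Prod.ext (funext fun i => by simp [Lamp.mul_fst, Lamp.one_fst]) (by simp [Lamp.mul_snd, Lamp.one_snd])
  inv_mul_cancel a := by
    refine Prod.ext ?_ ?_
    · funext i; simp [Lamp.mul_fst, Lamp.inv_fst, Lamp.inv_snd, Lamp.one_fst, show i - -a.2 + a.2 = i + a.2 + a.2 from by ring]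
    · simp [Lamp.mul_snd, Lamp.inv_snd, Lamp.one_snd]

def LX : Lamp := ((fun _ => 0), 1)
def LY : Lamp := ((fun i => if i = 0 then 1 else 0), 0)

lemma LY_pow (p : ℕ) : LY ^ p = ((fun i => if i = 0 then (p : ℤ) else 0), 0) := by
  induction p with
  | zero => exact Prod.ext (funext fun i => by simp [Lamp.one_fst]) rfl
  | succ n ih =>
    rw [pow_succ]
    refine Prod.ext ?_ ?_
    · funext i; rw [Lamp.mul_fst, ih]; by_cases h : i = 0 <;> simp [LY, h]
    · rw [Lamp.mul_snd, ih]; simp [LY]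

def pantsWord (p q r : ℕ) : FreeGroup (Fin 2) :=
  FreeGroup.of 1 * FreeGroup.of 0 * (FreeGroup.of 1) ^ p * (FreeGroup.of 0)⁻¹
    * (FreeGroup.of 1) ^ q * (FreeGroup.of 0)⁻¹ * (FreeGroup.of 1) ^ r

noncomputable def lampHom : FreeGroup (Fin 2) →* Lamp := FreeGroup.lift ![LX, LY]

lemma lamp_eval (p q r : ℕ) : (lampHom (pantsWord p q r)).1 1 = p := by
  simp only [pantsWord, map_mul, map_pow, map_inv, lampHom, FreeGroup.lift_apply_of,
    Matrix.cons_val_zero, Matrix.cons_val_one, Matrix.head_cons]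
  simp only [Lamp.mul_fst, Lamp.mul_snd, Lamp.inv_fst, Lamp.inv_snd]
  simp only [LY_pow]
  simp [LX, LY]

theorem pantsWord_family_distinct_but_equal_images (k t : ℕ)
    (hk : Even k) (hk2 : 2 ≤ k) (ht : Odd t) (ht3 : 3 ≤ t) :
    pantsWord ((t + 1) / 2) ((4 * k + t + 1) / 2) ((7 * k + t - 1) / 2)
      ≠ pantsWord ((k + t + 1) / 2) ((2 * k + t + 1) / 2) ((8 * k + t - 1) / 2)
    ∧ ∀ (G : Type*) [Group G], ∀ (g : G) (n m : ℤ)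
        (f : FreeGroup (Fin 2) →* G),
        f (FreeGroup.of 0) = g ^ n → f (FreeGroup.of 1) = g ^ m →
        f (pantsWord ((t + 1) / 2) ((4 * k + t + 1) / 2) ((7 * k + t - 1) / 2))
          = f (pantsWord ((k + t + 1) / 2) ((2 * k + t + 1) / 2)
                ((8 * k + t - 1) / 2)) := by
  obtain ⟨a, ha⟩ := hk
  obtain ⟨b, hb⟩ := ht
  constructor
  · intro h
    have h1 := congrArg (fun w => (lampHom w).1 1) h
    simp only [lamp_eval] at h1
    have h2 : ((t + 1) / 2 : ℕ) = ((k + t + 1) / 2 : ℕ) := Nat.cast_injective h1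
    omega
  · intro G _ g n m f hx hy
    have key : ∀ p q r : ℕ,
        f (pantsWord p q r) = g ^ (m + n + m * p + -n + m * q + -n + m * r) := by
      intro p q r
      simp only [pantsWord, map_mul, map_pow, map_inv, hx, hy]
      rw [← zpow_natCast (g ^ m) p, ← zpow_natCast (g ^ m) q, ← zpow_natCast (g ^ m) r,
        ← zpow_mul, ← zpow_mul, ← zpow_mul, ← zpow_neg]
      simp only [← zpow_add]
    rw [key, key]
    have hsum : ((t + 1) / 2 + (4 * k + t + 1) / 2 + (7 * k + t - 1) / 2 : ℕ)
        = ((k + t + 1) / 2 + (2 * k + t + 1) / 2 + (8 * k + t - 1) / 2 : ℕ) := by omega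
    congr 1
    have hz : (((t + 1) / 2 : ℕ) : ℤ) + ((4 * k + t + 1) / 2 : ℕ) + ((7 * k + t - 1) / 2 : ℕ)
        = (((k + t + 1) / 2 : ℕ) : ℤ) + ((2 * k + t + 1) / 2 : ℕ) + ((8 * k + t - 1) / 2 : ℕ) := by
      exact_mod_cast hsum
    linear_combination m * hz
end
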